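/- In a deterministic regular tree grammar, the bottom-up parser fails on input tree x if and only if there is no nonterminal A ∈ Φ from which x can be generated; i.e., the parser succeeds on x if and only if x ∈ ⋃_{A ∈ Φ} L(G|A). -/

import Mathlib

structure Rule (N : Type) (α : Type) where
  lhs : N
  sym : α
  rhs : List N
deriving DecidableEq

inductive RTree (α : Type) where
  | node : α → List (RTree α) → RTree α

def RTree.size {α : Type} : RTree α → Nat
  | .node _ ys => 1 + (ys.attach.map (fun y => RTree.size y.1)).sum
decreasing_by have := List.sizeOf_lt_of_mem y.2; simp only [RTree.node.sizeOf_spec]; omega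

def RTree.children {α : Type} : RTree α → List (RTree α)
  | .node _ ys => ys

def RTree.root {α : Type} : RTree α → α
  | .node x _ => x

def RTree.dfs {α : Type} : RTree α → List (RTree α)
  | .node x ys => (ys.attach.map (fun y => RTree.dfs y.1)).flatten ++ [.node x ys]
decreasing_by have := List.sizeOf_lt_of_mem y.2; simp only [RTree.node.sizeOf_spec]; omega

inductive GenList {N α : Type} (R : Set (Rule N α)) :
    List (Rule N α) → List N → List (RTree α) → Prop where
  | nil : GenList R [] [] []
  | step {r : Rule N α} {rs : List (Rule N α)} {stack : List N}
      {ys ts : List (RTree α)} :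
      r ∈ R →
      ys.length = r.rhs.length →
      GenList R rs (r.rhs ++ stack) (ys ++ ts) →
      GenList R (r :: rs) (r.lhs :: stack) (RTree.node r.sym ys :: ts)

def GenSeq {N α : Type} (R : Set (Rule N α)) (rs : List (Rule N α))
    (A : N) (t : RTree α) : Prop :=
  GenList R rs [A] [t]

def Lang {N α : Type} (R : Set (Rule N α)) (A : N) : Set (RTree α) :=
  {t | ∃ rs, GenSeq R rs A t}

def LangN {N α : Type} (R : Set (Rule N α)) (A : N) (n : Nat) : Set (RTree α) :=
  {t ∈ Lang R A | t.size ≤ n}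

def Deterministic {N α : Type} (R : Set (Rule N α)) : Prop :=
  ∀ r ∈ R, ∀ r' ∈ R, r.sym = r'.sym → r.rhs = r'.rhs → r = r'

def parse {N α : Type} [DecidableEq N] [DecidableEq α] (R : List (Rule N α)) :
    RTree α → Option (N × List (Rule N α))
  | RTree.node x ys => do
    let res ← ys.attach.mapM (fun y => parse R y.1)
    match R.find? (fun r => r.sym == x && r.rhs == res.map Prod.fst) with
    | some r => some (r.lhs, r :: (res.map Prod.snd).flatten)
    | none => none
decreasing_by have := List.sizeOf_lt_of_mem y.2; simp only [RTree.node.sizeOf_spec]; omega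

/-! ### Auxiliary lemmas -/

lemma my_mapM_option_eq_some {β γ : Type} (f : β → Option γ) :
    ∀ (l : List β) (res : List γ),
      l.mapM f = some res ↔ List.Forall₂ (fun y r => f y = some r) l res := by
  intro l res
  rw [← List.mapM'_eq_mapM]
  induction l generalizing res with
  | nil => simp [List.mapM', pure, List.forall₂_nil_left_iff, eq_comm]
  | cons a l ih =>
      have hdef : List.mapM' f (a :: l) =
          (f a).bind fun b => (List.mapM' f l).bind fun bs => some (b :: bs) := rfl
      rw [hdef]
      cases hfa : f a with
      | none => simp [List.forall₂_cons_left_iff, hfa]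
      | some b =>
          simp only [Option.bind_eq_some_iff, Option.some.injEq, List.forall₂_cons_left_iff, ih, hfa,
            exists_eq_left']
          constructor
          · rintro ⟨bs, hbs, rfl⟩; exact ⟨b, bs, rfl, hbs, rfl⟩
          · rintro ⟨b', bs, hb', hbs, rfl⟩
            cases hb'; exact ⟨bs, hbs, rfl⟩

lemma my_forall₂_append_split {β γ : Type} {p : β → γ → Prop} :
    ∀ {a b : List β} {c d : List γ}, List.Forall₂ p (a ++ b) (c ++ d) →
      a.length = c.length → List.Forall₂ p a c ∧ List.Forall₂ p b d := by
  intro a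
  induction a with
  | nil =>
      intro b c d h hl
      have : c = [] := by cases c <;> simp_all
      subst this; simp_all
  | cons x a ih =>
      intro b c d h hl
      cases c with
      | nil => simp at hl
      | cons y c =>
          simp only [List.cons_append] at h
          rcases h with _ | ⟨hxy, h⟩
          have := ih h (by simpa using hl)
          exact ⟨List.Forall₂.cons hxy this.1, this.2⟩

lemma my_forall₂_imp_mem {β γ : Type} {p q : β → γ → Prop} :
    ∀ {l1 : List β} {l2 : List γ}, List.Forall₂ p l1 l2 →
      (∀ a b, a ∈ l1 → p a b → q a b) → List.Forall₂ q l1 l2 := by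
  intro l1 l2 h
  induction h with
  | nil => intro _; exact List.Forall₂.nil
  | cons hab _ ih =>
      intro H
      exact List.Forall₂.cons (H _ _ (by simp) hab)
        (ih fun a b ha => H a b (by simp [ha]))

lemma GenList.myAppend {N α : Type} {R : Set (Rule N α)}
    {rs1 : List (Rule N α)} {s1 : List N} {t1 : List (RTree α)}
    (h1 : GenList R rs1 s1 t1) :
    ∀ {rs2 s2 t2}, GenList R rs2 s2 t2 →
      GenList R (rs1 ++ rs2) (s1 ++ s2) (t1 ++ t2) := by
  induction h1 with
  | nil => intro rs2 s2 t2 h2; simpa using h2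
  | step hr hlen _ ih =>
      intro rs2 s2 t2 h2
      simp only [List.cons_append]
      exact GenList.step hr hlen (by simpa [List.append_assoc] using ih h2)

/-- Combine a `Forall₂` family of singleton derivations into one derivation. -/
lemma my_forall₂_to_genList {N α : Type} {R : Set (Rule N α)} :
    ∀ {s : List N} {ts : List (RTree α)},
      List.Forall₂ (fun B t => ∃ rs, GenList R rs [B] [t]) s ts →
      ∃ rs, GenList R rs s ts := by
  intro s ts h
  induction h with
  | nil => exact ⟨[], GenList.nil⟩
  | @cons B t s ts hBt _ ih =>
      obtain ⟨rs1, h1⟩ := hBt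
      obtain ⟨rs2, h2⟩ := ih
      exact ⟨rs1 ++ rs2, by simpa using h1.myAppend h2⟩

/-- Split a derivation into singleton derivations. -/
lemma GenList.myForall₂ {N α : Type} {R : Set (Rule N α)} :
    ∀ {rs : List (Rule N α)} {s : List N} {ts : List (RTree α)},
      GenList R rs s ts →
      List.Forall₂ (fun B t => ∃ rs', GenList R rs' [B] [t]) s ts := by
  intro rs s ts h
  induction h with
  | nil => exact List.Forall₂.nil
  | @step r rs stack ys ts hr hlen _ ih =>
      have := my_forall₂_append_split ih (by simpa using hlen.symm)
      obtain ⟨h1, h2⟩ := this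
      refine List.Forall₂.cons ?_ h2
      obtain ⟨rs', hrs'⟩ := my_forall₂_to_genList h1
      exact ⟨r :: rs', GenList.step hr hlen (by simpa using hrs')⟩

lemma my_genList_flatten {N α : Type} [DecidableEq N] [DecidableEq α]
    {R : List (Rule N α)} :
    ∀ {ys : List (RTree α)} {res : List (N × List (Rule N α))},
      List.Forall₂ (fun (y : RTree α) (p : N × List (Rule N α)) =>
        GenList {r | r ∈ R} p.2 [p.1] [y]) ys res →
      GenList {r | r ∈ R} ((res.map Prod.snd).flatten) (res.map Prod.fst) ys := by
  intro ys res h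
  induction h with
  | nil => exact GenList.nil
  | @cons y p ys res hy _ ih =>
      simpa using hy.myAppend ih

/-- Soundness of the parser. -/
lemma my_parse_sound {N α : Type} [DecidableEq N] [DecidableEq α]
    (R : List (Rule N α)) :
    ∀ (t : RTree α) (A : N) (rs : List (Rule N α)),
      parse R t = some (A, rs) → GenList {r | r ∈ R} rs [A] [t]
  | RTree.node x ys => by
      intro A rs h
      rw [parse] at h
      simp only [bind, Option.bind_eq_some_iff] at h
      obtain ⟨res, hres, h⟩ := h
      cases hfind : R.find? (fun r => r.sym == x && r.rhs == res.map Prod.fst) with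
      | none => rw [hfind] at h; simp at h
      | some r =>
          rw [hfind] at h
          simp only [Option.some.injEq, Prod.mk.injEq] at h
          obtain ⟨hA, hrs⟩ := h
          have hrR : r ∈ R := List.mem_of_find?_eq_some hfind
          have hpred := List.find?_some hfind
          simp only [Bool.and_eq_true, beq_iff_eq] at hpred
          obtain ⟨hsym, hrhs⟩ := hpred
          -- Forall₂ on children
          have hmap : List.Forall₂ (fun y p => parse R y = some p) ys res := by
            have := (my_mapM_option_eq_some (fun y => parse R y.1) ys.attach res).mp hres
            have h2 : List.Forall₂ (fun (y : RTree α) p => parse R y = some p)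
                (ys.attach.map Subtype.val) res := by
              rw [List.forall₂_map_left_iff]; exact this
            simpa using h2
          have hgen : List.Forall₂ (fun (y : RTree α) (p : N × List (Rule N α)) =>
              GenList {r | r ∈ R} p.2 [p.1] [y]) ys res := by
            refine my_forall₂_imp_mem hmap ?_
            intro y p hy hp
            exact my_parse_sound R y p.1 p.2 (by rw [hp])
          subst hA hrs hsym
          have hlen : ys.length = r.rhs.length := by
            rw [hrhs, List.length_map]; exact hmap.length_eq
          refine GenList.step hrR hlen ?_
          rw [hrhs]
          simpa using my_genList_flatten hgen
  termination_by t => sizeOf t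
  decreasing_by
    have := List.sizeOf_lt_of_mem hy
    simp only [RTree.node.sizeOf_spec]; omega

/-- Completeness of the parser (needs determinism). -/
lemma my_parse_complete {N α : Type} [DecidableEq N] [DecidableEq α]
    (R : List (Rule N α)) (hdet : Deterministic {r | r ∈ R}) :
    ∀ (t : RTree α) (A : N) (rs : List (Rule N α)),
      GenList {r | r ∈ R} rs [A] [t] → ∃ rs', parse R t = some (A, rs')
  | RTree.node x ys => by
      intro A rs h
      cases h with
      | step hr hlen h' =>
          rename_i r rs'
          simp only [List.append_nil] at h'
          have hforall := h'.myForall₂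
          -- build res pointwise
          have key : ∀ (Bs : List N) (zs : List (RTree α)),
              (∀ z ∈ zs, ∀ (B : N) (rsz : List (Rule N α)),
                GenList {r | r ∈ R} rsz [B] [z] → ∃ rs'', parse R z = some (B, rs'')) →
              List.Forall₂ (fun B z => ∃ rs'', GenList {r | r ∈ R} rs'' [B] [z]) Bs zs →
              ∃ res : List (N × List (Rule N α)),
                List.Forall₂ (fun z p => parse R z = some p) zs res ∧
                res.map Prod.fst = Bs := by
            intro Bs zs H hf
            induction hf with
            | nil => exact ⟨[], List.Forall₂.nil, rfl⟩
            | @cons B z Bs zs hBz _ ih =>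
                obtain ⟨rsz, hrsz⟩ := hBz
                obtain ⟨p, hp⟩ := H z (by simp) B rsz hrsz
                obtain ⟨res, hres, hfst⟩ := ih (fun z hz => H z (by simp [hz]))
                exact ⟨(B, p) :: res, List.Forall₂.cons hp hres, by simp [hfst]⟩
          have Hrec : ∀ z ∈ ys, ∀ (B : N) (rsz : List (Rule N α)),
              GenList {r | r ∈ R} rsz [B] [z] → ∃ rs'', parse R z = some (B, rs'') :=
            fun z hz B rsz hg => my_parse_complete R hdet z B rsz hg
          obtain ⟨res, hres, hfst⟩ := key r.rhs ys Hrec hforall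
          -- mapM succeeds
          have hmapM : ys.attach.mapM (fun y => parse R y.1) = some res := by
            rw [my_mapM_option_eq_some]
            have : List.Forall₂ (fun (y : RTree α) p => parse R y = some p)
                (ys.attach.map Subtype.val) res := by simpa using hres
            rw [List.forall₂_map_left_iff] at this
            exact this
          -- find? succeeds
          cases hfind : R.find? (fun r' => r'.sym == r.sym && r'.rhs == res.map Prod.fst) with
          | none =>
              exfalso
              rw [List.find?_eq_none] at hfind
              exact hfind r hr (by simp [hfst])
          | some r' =>
              have hr'R : r' ∈ R := List.mem_of_find?_eq_some hfind
              have hpred := List.find?_some hfind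
              simp only [Bool.and_eq_true, beq_iff_eq] at hpred
              have hrr : r' = r := hdet r' hr'R r hr hpred.1 (by rw [hpred.2, hfst])
              refine ⟨r' :: (res.map Prod.snd).flatten, ?_⟩
              rw [parse]
              simp only [bind, Option.bind_eq_some_iff]
              exact ⟨res, hmapM, by rw [hfind]; simp [hrr]⟩
  termination_by t => sizeOf t
  decreasing_by
    have := List.sizeOf_lt_of_mem hz
    simp only [RTree.node.sizeOf_spec]; omega

theorem stmt14 {N alpha : Type} [DecidableEq N] [DecidableEq alpha]
    (R : List (Rule N alpha)) (hdet : Deterministic {r | r ∈ R})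
    (t : RTree alpha) :
    (∃ res : N × List (Rule N alpha), parse R t = some res) ↔
      ∃ A : N, t ∈ Lang {r | r ∈ R} A := by
  constructor
  · rintro ⟨⟨A, rs⟩, h⟩
    exact ⟨A, rs, my_parse_sound R t A rs h⟩
  · rintro ⟨A, rs, h⟩
    obtain ⟨rs', h'⟩ := my_parse_complete R hdet t A rs h
    exact ⟨(A, rs'), h'⟩
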